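/- Let w ∈ ℝ_{≥0}^n and let 1 ≤ k ≤ n be an integer such that at least k of the entries w_i are strictly positive. Then there exists τ > 0 such that Σ_{i=1}^n min{1, w_i/τ} = k, and the resulting probability vector p with p_i = min{1, w_i/τ} is the same for every τ > 0 satisfying this equation (i.e., the PPS probabilities are well defined). -/
import Mathlib

/-- Auxiliary: if `τ ≤ τ'` and the sums agree, each term agrees. -/
lemma pps_aux (n : ℕ) (w : Fin n → ℝ) (hw : ∀ i, 0 ≤ w i) {τ τ' : ℝ}
    (hτ : 0 < τ) (h : τ ≤ τ')
    (hsum : ∑ i, min 1 (w i / τ) = ∑ i, min 1 (w i / τ')) :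
    ∀ i, min 1 (w i / τ) = min 1 (w i / τ') := by
  have hle : ∀ i ∈ Finset.univ, min 1 (w i / τ') ≤ min 1 (w i / τ) := by
    intro i _
    gcongr
    exact hw i
  have := (Finset.sum_eq_sum_iff_of_le hle).mp hsum.symm
  intro i
  exact (this i (Finset.mem_univ i)).symm

/-- **PPS probabilities are well defined.**
For `w ∈ ℝ_{≥0}^n` and `1 ≤ k ≤ n` with at least `k` strictly positive entries,
there exists `τ > 0` with `∑ i, min 1 (w i / τ) = k`, and the probability
vector `p i = min 1 (w i / τ)` is the same for every such `τ > 0`. -/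
theorem pps_well_defined (n k : ℕ) (w : Fin n → ℝ) (hw : ∀ i, 0 ≤ w i)
    (hk1 : 1 ≤ k) (hkn : k ≤ n)
    (hpos : k ≤ (Finset.univ.filter fun i => 0 < w i).card) :
    (∃ τ : ℝ, 0 < τ ∧ ∑ i, min 1 (w i / τ) = (k : ℝ)) ∧
      ∀ τ τ' : ℝ, 0 < τ → 0 < τ' →
        (∑ i, min 1 (w i / τ) = (k : ℝ)) → (∑ i, min 1 (w i / τ') = (k : ℝ)) →
        ∀ i, min 1 (w i / τ) = min 1 (w i / τ') := by
  constructor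
  · -- existence
    set S := (Finset.univ.filter fun i => 0 < w i) with hS
    have hSne : S.Nonempty := Finset.card_pos.mp (lt_of_lt_of_le hk1 hpos)
    set a := S.inf' hSne w with ha
    have ha0 : 0 < a := by
      rw [ha, Finset.lt_inf'_iff]
      intro i hi
      exact (Finset.mem_filter.mp hi).2
    set b := a + ∑ i, w i with hb
    have hsumw : 0 ≤ ∑ i, w i := Finset.sum_nonneg fun i _ => hw i
    have hab : a ≤ b := le_add_of_nonneg_right hsumw
    have hb0 : 0 < b := lt_of_lt_of_le ha0 hab
    set f : ℝ → ℝ := fun τ => ∑ i, min 1 (w i / τ) with hf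
    have hfa : (k : ℝ) ≤ f a := by
      have : (S.card : ℝ) = f a := by
        have h1 : ∀ i ∈ S, min 1 (w i / a) = 1 := by
          intro i hi
          have : a ≤ w i := Finset.inf'_le w hi
          have : 1 ≤ w i / a := (one_le_div ha0).mpr this
          exact min_eq_left this
        have h2 : ∀ i ∈ Finset.univ, i ∉ S → min 1 (w i / a) = 0 := by
          intro i _ hi
          have hwi : w i = 0 := by
            by_contra hne
            exact hi (Finset.mem_filter.mpr ⟨Finset.mem_univ i,
              lt_of_le_of_ne (hw i) (Ne.symm hne)⟩)
          simp [hwi, le_of_lt ha0]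
        calc (S.card : ℝ) = ∑ i ∈ S, min 1 (w i / a) := by
              rw [Finset.sum_congr rfl h1]; simp
          _ = f a := Finset.sum_subset (Finset.subset_univ S) h2
      calc (k : ℝ) ≤ (S.card : ℝ) := by exact_mod_cast hpos
        _ ≤ f a := le_of_eq this
    have hfb : f b ≤ (k : ℝ) := by
      have h1 : f b ≤ ∑ i, w i / b :=
        Finset.sum_le_sum fun i _ => min_le_right _ _
      have h2 : ∑ i, (w i / b) = (∑ i, w i) / b := by
        rw [Finset.sum_div]
      have h3 : (∑ i, w i) / b ≤ 1 := by
        rw [div_le_one hb0]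
        linarith
      have : (1 : ℝ) ≤ k := by exact_mod_cast hk1
      calc f b ≤ (∑ i, w i) / b := by rw [← h2]; exact h1
        _ ≤ 1 := h3
        _ ≤ k := this
    have hcont : ContinuousOn f (Set.Icc a b) := by
      apply continuousOn_finset_sum
      intro i _
      exact ContinuousOn.inf continuousOn_const
        (ContinuousOn.div continuousOn_const continuousOn_id
          fun x hx => ne_of_gt (lt_of_lt_of_le ha0 hx.1))
    have hIVT := intermediate_value_Icc' hab hcont
    have hk : (k : ℝ) ∈ Set.Icc (f b) (f a) := ⟨hfb, hfa⟩
    obtain ⟨τ, hτmem, hτeq⟩ := hIVT hk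
    exact ⟨τ, lt_of_lt_of_le ha0 hτmem.1, hτeq⟩
  · -- uniqueness
    intro τ τ' hτ hτ' h1 h2 i
    rcases le_total τ τ' with hle | hle
    · exact pps_aux n w hw hτ hle (h1.trans h2.symm) i
    · exact (pps_aux n w hw hτ' hle (h2.trans h1.symm) i).symm
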